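/- Let X be an infinite dimensional operator space. If for every proper closed nontrivial subspace Y of X the quotient operator space X/Y is maximal, then X is maximal. -/

import Mathlib

noncomputable section

namespace OSP

/-- A sequence of matrix norms (as bare functions) on a type `X`. -/
abbrev MatNorms (X : Type) : Type := ∀ n : ℕ, Matrix (Fin n) (Fin n) X → ℝ

/-- The operator norm of a scalar matrix, viewed as an operator on Euclidean space. -/
def scNorm {m : Type} [Fintype m] [DecidableEq m] (A : Matrix m m ℂ) : ℝ :=
  ‖Matrix.toEuclideanCLM (𝕜 := ℂ) (n := m) A‖

/-- The two-sided scalar multiplication `a · x · b` of a matrix over `X` by scalar matrices. -/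
def smulMat {X : Type} [AddCommGroup X] [Module ℂ X] {n : ℕ}
    (a : Matrix (Fin n) (Fin n) ℂ) (x : Matrix (Fin n) (Fin n) X)
    (b : Matrix (Fin n) (Fin n) ℂ) : Matrix (Fin n) (Fin n) X :=
  Matrix.of fun i j => ∑ k, ∑ l, (a i k * b l j) • x k l

/-- An (admissible, abstract) operator space structure on a normed space `X`:
a sequence of matrix norms satisfying Ruan's axioms whose first level is the norm of `X`. -/
structure OSS (X : Type) [NormedAddCommGroup X] [NormedSpace ℂ X] where
  N : MatNorms X
  nonneg : ∀ n x, 0 ≤ N n x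
  add_le : ∀ n (x y : Matrix (Fin n) (Fin n) X), N n (x + y) ≤ N n x + N n y
  smul_eq : ∀ n (c : ℂ) (x : Matrix (Fin n) (Fin n) X), N n (c • x) = ‖c‖ * N n x
  eq_zero : ∀ n (x : Matrix (Fin n) (Fin n) X), N n x = 0 → x = 0
  level_one : ∀ x : X, N 1 (Matrix.of fun _ _ => x) = ‖x‖
  ruan_mul : ∀ n (a b : Matrix (Fin n) (Fin n) ℂ) (x : Matrix (Fin n) (Fin n) X),
    N n (smulMat a x b) ≤ scNorm a * N n x * scNorm b
  ruan_block : ∀ (n m : ℕ) (x : Matrix (Fin n) (Fin n) X) (y : Matrix (Fin m) (Fin m) X),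
    N (n + m) ((Matrix.fromBlocks x 0 0 y).submatrix finSumFinEquiv.symm finSumFinEquiv.symm)
      = max (N n x) (N m y)

/-- A bundled operator space. -/
structure OpSpace where
  carrier : Type
  [grp : NormedAddCommGroup carrier]
  [mod : NormedSpace ℂ carrier]
  str : OSS carrier

attribute [instance] OpSpace.grp OpSpace.mod

/-- `f` amplifies with bound `C` at all matrix levels. -/
def ampBound {X Y : Type} (NX : MatNorms X) (NY : MatNorms Y) (f : X → Y) (C : ℝ) : Prop :=
  ∀ n (x : Matrix (Fin n) (Fin n) X), NY n (x.map f) ≤ C * NX n x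

/-- `f` is completely bounded. -/
def CompletelyBounded {X Y : Type} (NX : MatNorms X) (NY : MatNorms Y) (f : X → Y) : Prop :=
  ∃ C, 0 ≤ C ∧ ampBound NX NY f C

/-- The completely bounded norm of `f`. -/
def cbNorm {X Y : Type} (NX : MatNorms X) (NY : MatNorms Y) (f : X → Y) : ℝ :=
  sInf {C | 0 ≤ C ∧ ampBound NX NY f C}

/-- The matrix norms of the minimal operator space structure `Min X`. -/
def minN (X : Type) [NormedAddCommGroup X] [NormedSpace ℂ X] : MatNorms X :=
  fun n x => sSup {r | ∃ f : X →L[ℂ] ℂ, ‖f‖ ≤ 1 ∧ r = scNorm (x.map ⇑f)}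

/-- The matrix norms of the maximal operator space structure `Max X`. -/
def maxN (X : Type) [NormedAddCommGroup X] [NormedSpace ℂ X] : MatNorms X :=
  fun n x => sSup {r | ∃ (Z : OpSpace) (u : X →L[ℂ] Z.carrier), ‖u‖ ≤ 1 ∧ r = Z.str.N n (x.map ⇑u)}

/-- The inherited (subspace) matrix norms on a submodule. -/
def subN {X : Type} [NormedAddCommGroup X] [NormedSpace ℂ X]
    (NX : MatNorms X) (Y : Submodule ℂ X) : MatNorms Y :=
  fun n x => NX n (x.map ⇑Y.subtype)

/-- The quotient matrix norms on `X ⧸ Y`. -/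
def quotN {X : Type} [NormedAddCommGroup X] [NormedSpace ℂ X]
    (NX : MatNorms X) (Y : Submodule ℂ X) : MatNorms (X ⧸ Y) :=
  fun n z => sInf {r | ∃ x : Matrix (Fin n) (Fin n) X, x.map ⇑Y.mkQ = z ∧ r = NX n x}

/-- The canonical operator space matrix norms on `M_d(ℂ)`. -/
def MnN (d : ℕ) : MatNorms (Matrix (Fin d) (Fin d) ℂ) :=
  fun n x => scNorm (Matrix.of fun p q : Fin n × Fin d => x p.1 q.1 p.2 q.2)

/-- The dual matrix norms on `X* = X →L[ℂ] ℂ`, via `M_n(X*) = CB(X, M_n)`. -/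
def dualN {X : Type} [NormedAddCommGroup X] [NormedSpace ℂ X] (NX : MatNorms X) :
    MatNorms (X →L[ℂ] ℂ) :=
  fun n F => cbNorm NX (MnN n) (fun x => Matrix.of fun i j => F i j x)

/-- The annihilator `Y⊥` of a subspace `Y ⊆ X` inside the dual `X*`. -/
def ann {X : Type} [NormedAddCommGroup X] [NormedSpace ℂ X] (Y : Submodule ℂ X) :
    Submodule ℂ (X →L[ℂ] ℂ) where
  carrier := {f | ∀ y ∈ Y, f y = 0}
  add_mem' := by intro f g hf hg y hy; simp [hf y hy, hg y hy]
  zero_mem' := by intro y hy; simp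
  smul_mem' := by intro c f hf y hy; simp [hf y hy]

/-- A complete quotient map: every amplification maps the open unit ball onto the open unit ball. -/
def CompleteQuotientMap {X Z : Type} (NX : MatNorms X) (NZ : MatNorms Z) (f : X → Z) : Prop :=
  ∀ n, (fun x : Matrix (Fin n) (Fin n) X => x.map f) '' {x | NX n x < 1} = {z | NZ n z < 1}

end OSP

namespace OSP

variable {X : Type} [NormedAddCommGroup X] [NormedSpace ℂ X]

/-- The quotient map `X → X ⧸ Y` as a continuous linear map. -/
def mkQCLM (Y : Submodule ℂ X) [IsClosed (Y : Set X)] : X →L[ℂ] X ⧸ Y :=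
  Y.mkQ.mkContinuous 1 fun x => by
    simpa using Submodule.Quotient.norm_mk_le Y x

/-- Precomposition with the quotient map: the canonical embedding `(X/Y)* → X*`,
whose range is the annihilator `Y⊥`. -/
def pullQ (Y : Submodule ℂ X) [IsClosed (Y : Set X)] :
    ((X ⧸ Y) →L[ℂ] ℂ) →ₗ[ℂ] (X →L[ℂ] ℂ) where
  toFun f := f.comp (mkQCLM Y)
  map_add' := by intro f g; ext x; simp
  map_smul' := by intro c f; ext x; simp

/-- The restriction map `X* → Y*`. -/
def resMap (Y : Submodule ℂ X) : (X →L[ℂ] ℂ) →ₗ[ℂ] (Y →L[ℂ] ℂ) where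
  toFun f := f.comp Y.subtypeL
  map_add' := by intro f g; ext x; simp
  map_smul' := by intro c f; ext x; simp

theorem ann_le_ker_resMap (Y : Submodule ℂ X) : ann Y ≤ LinearMap.ker (resMap Y) := by
  intro f hf
  simp only [LinearMap.mem_ker]
  ext y
  exact hf y y.2

/-- The canonical map `X*/Y⊥ → Y*` induced by restriction. -/
def resQbar (Y : Submodule ℂ X) : ((X →L[ℂ] ℂ) ⧸ ann Y) →ₗ[ℂ] (Y →L[ℂ] ℂ) :=
  (ann Y).liftQ (resMap Y) (ann_le_ker_resMap Y)

end OSP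
namespace OSP

open Matrix in
/-- Generic bound for `scNorm` via coordinatewise square sums. -/
lemma scNorm_le_one_of {k : ℕ} (A : Matrix (Fin k) (Fin k) ℂ)
    (h : ∀ v : Fin k → ℂ, ∑ p, ‖A.mulVec v p‖ ^ 2 ≤ ∑ p, ‖v p‖ ^ 2) :
    scNorm A ≤ 1 := by
  refine ContinuousLinearMap.opNorm_le_bound _ zero_le_one fun v => ?_
  rw [one_mul, EuclideanSpace.norm_eq, EuclideanSpace.norm_eq]
  exact Real.sqrt_le_sqrt (h ((WithLp.equiv 2 _) v))

lemma scNorm_nonneg {k : ℕ} (A : Matrix (Fin k) (Fin k) ℂ) : 0 ≤ scNorm A :=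
  norm_nonneg _

lemma scNorm_std_le_one {k : ℕ} (i j : Fin k) :
    scNorm (Matrix.single i j (1 : ℂ)) ≤ 1 := by
  apply scNorm_le_one_of
  intro v
  have hmv : ∀ p, (Matrix.single i j (1 : ℂ)).mulVec v p
      = if i = p then v j else 0 := by
    intro p
    by_cases hip : i = p
    · subst hip
      simp only [Matrix.mulVec, dotProduct, Matrix.single, Matrix.of_apply,
        if_pos rfl, true_and, ite_mul, one_mul, zero_mul]
      simp
    · simp only [Matrix.mulVec, dotProduct, Matrix.single, Matrix.of_apply,
        hip, false_and, if_false, zero_mul, Finset.sum_const_zero, if_neg hip]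
  calc ∑ p, ‖(Matrix.single i j (1:ℂ)).mulVec v p‖ ^ 2
      = ∑ p, (if i = p then ‖v j‖ ^ 2 else 0) := by
        refine Finset.sum_congr rfl fun p _ => ?_
        rw [hmv p]
        by_cases hip : i = p <;> simp [hip]
    _ = ‖v j‖ ^ 2 := by simp
    _ ≤ ∑ p, ‖v p‖ ^ 2 :=
        Finset.single_le_sum (fun p _ => sq_nonneg ‖v p‖) (Finset.mem_univ j)

/-- A `0/1` diagonal matrix cutting down to the coordinates where `c` holds. -/
def cutMat {k : ℕ} (c : Fin k → Bool) : Matrix (Fin k) (Fin k) ℂ :=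
  Matrix.of fun p q => if p = q ∧ c p then 1 else 0

lemma scNorm_cut_le_one {k : ℕ} (c : Fin k → Bool) : scNorm (cutMat c) ≤ 1 := by
  apply scNorm_le_one_of
  intro v
  have hmv : ∀ p, (cutMat c).mulVec v p = if c p then v p else 0 := by
    intro p
    simp only [Matrix.mulVec, dotProduct, cutMat, Matrix.of_apply]
    rw [Finset.sum_eq_single p]
    · by_cases hc : c p <;> simp [hc]
    · intro b _ hb
      simp [Ne.symm hb]
    · simp
  refine Finset.sum_le_sum fun p _ => ?_
  rw [hmv p]
  by_cases hc : c p <;> simp [hc, sq_nonneg]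

section Basic

variable {X : Type} [NormedAddCommGroup X] [NormedSpace ℂ X]

lemma smulMat_std_std {n : ℕ} (r s i j : Fin n) (y : Matrix (Fin n) (Fin n) X) :
    smulMat (Matrix.single r i 1) y (Matrix.single j s 1)
      = Matrix.single r s (y i j) := by
  ext p q
  simp only [smulMat, Matrix.of_apply, Matrix.single]
  rw [Finset.sum_eq_single i]
  · rw [Finset.sum_eq_single j]
    · by_cases h1 : r = p <;> by_cases h2 : s = q <;> simp [h1, h2]
    · intro b _ hb
      simp [Ne.symm hb]
    · simp
  · intro b _ hb
    simp [Ne.symm hb]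
  · simp

lemma smulMat_cut {k : ℕ} (c : Fin k → Bool) (M : Matrix (Fin k) (Fin k) X) :
    smulMat (cutMat c) M (cutMat c)
      = Matrix.of fun p q => if c p ∧ c q then M p q else 0 := by
  ext p q
  simp only [smulMat, cutMat, Matrix.of_apply]
  rw [Finset.sum_eq_single p]
  · rw [Finset.sum_eq_single q]
    · by_cases h1 : c p <;> by_cases h2 : c q <;> simp [h1, h2]
    · intro b _ hb
      simp [hb]
    · simp
  · intro b _ hb
    simp [Ne.symm hb]
  · simp

variable (os : OSS X)

lemma OSS.N_zero (n : ℕ) : os.N n 0 = 0 := by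
  simpa using os.smul_eq n 0 0

lemma OSS.N_sum_le {ι : Type*} (n : ℕ) (s : Finset ι)
    (f : ι → Matrix (Fin n) (Fin n) X) :
    os.N n (∑ i ∈ s, f i) ≤ ∑ i ∈ s, os.N n (f i) := by
  classical
  induction s using Finset.induction_on with
  | empty => simp [os.N_zero]
  | @insert a s ha ih =>
      rw [Finset.sum_insert ha, Finset.sum_insert ha]
      exact le_trans (os.add_le n _ _) (by linarith)

lemma OSS.N_pad_left (k m : ℕ) (y : Matrix (Fin k) (Fin k) X) :
    os.N (k + m)
      ((Matrix.fromBlocks y 0 0 0).submatrix finSumFinEquiv.symm finSumFinEquiv.symm)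
      = os.N k y := by
  rw [os.ruan_block k m y 0, os.N_zero, max_eq_left (os.nonneg _ _)]

lemma OSS.N_pad_right (k m : ℕ) (w : Matrix (Fin m) (Fin m) X) :
    os.N (k + m)
      ((Matrix.fromBlocks 0 0 0 w).submatrix finSumFinEquiv.symm finSumFinEquiv.symm)
      = os.N m w := by
  rw [os.ruan_block k m 0 w, os.N_zero, max_eq_right (os.nonneg _ _)]

lemma OSS.N_corner_left (k m : ℕ) (M : Matrix (Fin (k + m)) (Fin (k + m)) X) :
    os.N k (Matrix.of fun i j =>
        M (finSumFinEquiv (Sum.inl i)) (finSumFinEquiv (Sum.inl j)))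
      ≤ os.N (k + m) M := by
  set c : Fin (k + m) → Bool := fun p => (finSumFinEquiv.symm p).isLeft with hc
  set A : Matrix (Fin k) (Fin k) X := Matrix.of fun i j =>
      M (finSumFinEquiv (Sum.inl i)) (finSumFinEquiv (Sum.inl j)) with hA
  have key : smulMat (cutMat c) M (cutMat c)
      = (Matrix.fromBlocks A 0 0 0).submatrix finSumFinEquiv.symm finSumFinEquiv.symm := by
    rw [smulMat_cut]
    ext p q
    simp only [Matrix.of_apply, Matrix.submatrix_apply]
    rcases hp : finSumFinEquiv.symm p with a | a <;>
      rcases hq : finSumFinEquiv.symm q with b | b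
    · have hp' : p = finSumFinEquiv (Sum.inl a) := (Equiv.symm_apply_eq _).mp hp
      have hq' : q = finSumFinEquiv (Sum.inl b) := (Equiv.symm_apply_eq _).mp hq
      simp [hc, hp, hq, hA, hp', hq']
    · simp [hc, hp, hq]
    · simp [hc, hp, hq]
    · simp [hc, hp, hq]
  have h1 : os.N (k + m) (smulMat (cutMat c) M (cutMat c))
      ≤ scNorm (cutMat c) * os.N (k + m) M * scNorm (cutMat c) :=
    os.ruan_mul _ _ _ _
  rw [key] at h1
  rw [os.N_pad_left k m A] at h1
  calc os.N k A ≤ scNorm (cutMat c) * os.N (k + m) M * scNorm (cutMat c) := h1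
    _ ≤ scNorm (cutMat c) * os.N (k + m) M :=
        mul_le_of_le_one_right (mul_nonneg (scNorm_nonneg _) (os.nonneg _ _))
          (scNorm_cut_le_one c)
    _ ≤ os.N (k + m) M := mul_le_of_le_one_left (os.nonneg _ _) (scNorm_cut_le_one c)

lemma OSS.N_corner_right (k m : ℕ) (M : Matrix (Fin (k + m)) (Fin (k + m)) X) :
    os.N m (Matrix.of fun i j =>
        M (finSumFinEquiv (Sum.inr i)) (finSumFinEquiv (Sum.inr j)))
      ≤ os.N (k + m) M := by
  set c : Fin (k + m) → Bool := fun p => (finSumFinEquiv.symm p).isRight with hc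
  set D : Matrix (Fin m) (Fin m) X := Matrix.of fun i j =>
      M (finSumFinEquiv (Sum.inr i)) (finSumFinEquiv (Sum.inr j)) with hD
  have key : smulMat (cutMat c) M (cutMat c)
      = (Matrix.fromBlocks 0 0 0 D).submatrix finSumFinEquiv.symm finSumFinEquiv.symm := by
    rw [smulMat_cut]
    ext p q
    simp only [Matrix.of_apply, Matrix.submatrix_apply]
    rcases hp : finSumFinEquiv.symm p with a | a <;>
      rcases hq : finSumFinEquiv.symm q with b | b
    · simp [hc, hp, hq]
    · simp [hc, hp, hq]
    · simp [hc, hp, hq]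
    · have hp' : p = finSumFinEquiv (Sum.inr a) := (Equiv.symm_apply_eq _).mp hp
      have hq' : q = finSumFinEquiv (Sum.inr b) := (Equiv.symm_apply_eq _).mp hq
      simp [hc, hp, hq, hD, hp', hq']
  have h1 : os.N (k + m) (smulMat (cutMat c) M (cutMat c))
      ≤ scNorm (cutMat c) * os.N (k + m) M * scNorm (cutMat c) :=
    os.ruan_mul _ _ _ _
  rw [key, os.N_pad_right k m D] at h1
  calc os.N m D ≤ scNorm (cutMat c) * os.N (k + m) M * scNorm (cutMat c) := h1
    _ ≤ scNorm (cutMat c) * os.N (k + m) M :=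
        mul_le_of_le_one_right (mul_nonneg (scNorm_nonneg _) (os.nonneg _ _))
          (scNorm_cut_le_one c)
    _ ≤ os.N (k + m) M := mul_le_of_le_one_left (os.nonneg _ _) (scNorm_cut_le_one c)

instance instNeZeroOneAdd (m : ℕ) : NeZero (1 + m) := ⟨by omega⟩

lemma OSS.N_std00 (m : ℕ) (z : X) :
    os.N (1 + m) (Matrix.single (0 : Fin (1 + m)) (0 : Fin (1 + m)) z) = ‖z‖ := by
  have heq : (Matrix.fromBlocks (Matrix.of fun _ _ => z) 0 0
        (0 : Matrix (Fin m) (Fin m) X)).submatrix finSumFinEquiv.symm finSumFinEquiv.symm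
      = Matrix.single (0 : Fin (1 + m)) (0 : Fin (1 + m)) z := by
    ext p q
    simp only [Matrix.submatrix_apply, Matrix.single, Matrix.of_apply]
    have hzero : finSumFinEquiv (Sum.inl (0 : Fin 1)) = (0 : Fin (1 + m)) := by
      apply Fin.ext
      simp [finSumFinEquiv]
    have hne : ∀ (a : Fin m) (p : Fin (1 + m)), finSumFinEquiv.symm p = Sum.inr a → p ≠ 0 := by
      intro a p hp hcon
      subst hcon
      rw [← hzero, Equiv.symm_apply_apply] at hp
      exact Sum.inl_ne_inr hp
    rcases hp : finSumFinEquiv.symm p with a | a <;>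
      rcases hq : finSumFinEquiv.symm q with b | b
    · have hp' : p = finSumFinEquiv (Sum.inl a) := (Equiv.symm_apply_eq _).mp hp
      have hq' : q = finSumFinEquiv (Sum.inl b) := (Equiv.symm_apply_eq _).mp hq
      have ha : a = 0 := Subsingleton.elim _ _
      have hb : b = 0 := Subsingleton.elim _ _
      subst ha hb
      simp [hp', hq', hzero]
    · simp [Ne.symm (hne b q hq)]
    · simp [Ne.symm (hne a p hp)]
    · simp [Ne.symm (hne a p hp)]
  rw [← heq, os.N_pad_left 1 m, os.level_one z]

end Basic

end OSP
namespace OSP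

section Basic2

variable {X : Type} [NormedAddCommGroup X] [NormedSpace ℂ X] (os : OSS X)

lemma OSS.norm_entry_le (n : ℕ) (y : Matrix (Fin n) (Fin n) X) (i j : Fin n) :
    ‖y i j‖ ≤ os.N n y := by
  obtain ⟨m, rfl⟩ : ∃ m, n = 1 + m := ⟨n - 1, by have := i.pos; omega⟩
  have h2 := os.ruan_mul (1 + m) (Matrix.single 0 i 1)
    (Matrix.single j 0 1) y
  rw [smulMat_std_std, os.N_std00] at h2
  calc ‖y i j‖ ≤ scNorm (Matrix.single (0 : Fin (1+m)) i 1) * os.N (1 + m) y *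
        scNorm (Matrix.single j (0 : Fin (1+m)) 1) := h2
    _ ≤ scNorm (Matrix.single (0 : Fin (1+m)) i 1) * os.N (1 + m) y :=
        mul_le_of_le_one_right (mul_nonneg (scNorm_nonneg _) (os.nonneg _ _))
          (scNorm_std_le_one _ _)
    _ ≤ os.N (1 + m) y := mul_le_of_le_one_left (os.nonneg _ _) (scNorm_std_le_one _ _)

lemma OSS.N_std_le (n : ℕ) (i j : Fin n) (z : X) :
    os.N n (Matrix.single i j z) ≤ ‖z‖ := by
  obtain ⟨m, rfl⟩ : ∃ m, n = 1 + m := ⟨n - 1, by have := i.pos; omega⟩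
  have h2 := os.ruan_mul (1 + m) (Matrix.single i 0 1)
    (Matrix.single 0 j 1) (Matrix.single (0 : Fin (1+m)) (0 : Fin (1+m)) z)
  rw [smulMat_std_std, Matrix.single_apply_same, os.N_std00] at h2
  calc os.N (1 + m) (Matrix.single i j z)
      ≤ scNorm (Matrix.single i (0 : Fin (1+m)) 1) * ‖z‖ *
        scNorm (Matrix.single (0 : Fin (1+m)) j 1) := h2
    _ ≤ scNorm (Matrix.single i (0 : Fin (1+m)) 1) * ‖z‖ :=
        mul_le_of_le_one_right (mul_nonneg (scNorm_nonneg _) (norm_nonneg _))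
          (scNorm_std_le_one _ _)
    _ ≤ ‖z‖ := mul_le_of_le_one_left (norm_nonneg _) (scNorm_std_le_one _ _)

lemma OSS.N_le_sum (n : ℕ) (y : Matrix (Fin n) (Fin n) X) :
    os.N n y ≤ ∑ i, ∑ j, ‖y i j‖ := by
  rcases Nat.eq_zero_or_pos n with rfl | hn
  · have hy : y = 0 := by
      ext i j
      exact i.elim0
    rw [hy, os.N_zero]
    simp
  · calc os.N n y = os.N n (∑ i, ∑ j, Matrix.single i j (y i j)) := by
          rw [← Matrix.matrix_eq_sum_single]
      _ ≤ ∑ i, ∑ j, os.N n (Matrix.single i j (y i j)) := by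
          refine le_trans (os.N_sum_le n _ _) (Finset.sum_le_sum fun i _ => ?_)
          exact os.N_sum_le n _ _
      _ ≤ ∑ i, ∑ j, ‖y i j‖ := by
          refine Finset.sum_le_sum fun i _ => Finset.sum_le_sum fun j _ => ?_
          exact os.N_std_le n i j (y i j)

end Basic2

end OSP
namespace OSP

section QuotOSS

variable {Z : Type} [NormedAddCommGroup Z] [NormedSpace ℂ Z]

lemma exists_matrix_lift (W : Submodule ℂ Z) {n : ℕ}
    (z : Matrix (Fin n) (Fin n) (Z ⧸ W)) :
    ∃ x : Matrix (Fin n) (Fin n) Z, x.map ⇑W.mkQ = z := by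
  refine ⟨Matrix.of fun i j => (Submodule.Quotient.mk_surjective W (z i j)).choose, ?_⟩
  ext i j
  exact (Submodule.Quotient.mk_surjective W (z i j)).choose_spec

variable (oz : OSS Z) (W : Submodule ℂ Z)

lemma quotN_set_nonempty {n : ℕ} (z : Matrix (Fin n) (Fin n) (Z ⧸ W)) :
    {r | ∃ x : Matrix (Fin n) (Fin n) Z, x.map ⇑W.mkQ = z ∧ r = oz.N n x}.Nonempty := by
  obtain ⟨x, hx⟩ := exists_matrix_lift W z
  exact ⟨oz.N n x, x, hx, rfl⟩

lemma quotN_set_bddBelow {n : ℕ} (z : Matrix (Fin n) (Fin n) (Z ⧸ W)) :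
    BddBelow {r | ∃ x : Matrix (Fin n) (Fin n) Z, x.map ⇑W.mkQ = z ∧ r = oz.N n x} := by
  refine ⟨0, ?_⟩
  rintro r ⟨x, _, rfl⟩
  exact oz.nonneg n x

lemma quotN_nonneg {n : ℕ} (z : Matrix (Fin n) (Fin n) (Z ⧸ W)) :
    0 ≤ quotN oz.N W n z :=
  le_csInf (quotN_set_nonempty oz W z) (by rintro r ⟨x, _, rfl⟩; exact oz.nonneg n x)

lemma quotN_le {n : ℕ} {z : Matrix (Fin n) (Fin n) (Z ⧸ W)}
    {x : Matrix (Fin n) (Fin n) Z} (hx : x.map ⇑W.mkQ = z) :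
    quotN oz.N W n z ≤ oz.N n x :=
  csInf_le (quotN_set_bddBelow oz W z) ⟨x, hx, rfl⟩

lemma exists_lift_lt {n : ℕ} (z : Matrix (Fin n) (Fin n) (Z ⧸ W)) {ε : ℝ} (hε : 0 < ε) :
    ∃ x : Matrix (Fin n) (Fin n) Z, x.map ⇑W.mkQ = z ∧ oz.N n x < quotN oz.N W n z + ε := by
  obtain ⟨r, hr, hlt⟩ := Real.lt_sInf_add_pos (quotN_set_nonempty oz W z) hε
  obtain ⟨x, hx, rfl⟩ := hr
  exact ⟨x, hx, hlt⟩

lemma map_smulMat {Z' : Type} [AddCommGroup Z'] [Module ℂ Z'] (f : Z →ₗ[ℂ] Z') {n : ℕ}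
    (a b : Matrix (Fin n) (Fin n) ℂ) (x : Matrix (Fin n) (Fin n) Z) :
    (smulMat a x b).map ⇑f = smulMat a (x.map ⇑f) b := by
  ext p q
  simp [smulMat, Matrix.map_apply, map_sum, map_smul]

lemma quotN_zero {n : ℕ} : quotN oz.N W n (0 : Matrix (Fin n) (Fin n) (Z ⧸ W)) = 0 := by
  refine le_antisymm ?_ (quotN_nonneg oz W _)
  have h0 : (0 : Matrix (Fin n) (Fin n) Z).map ⇑W.mkQ = 0 := by
    ext i j
    simp [Matrix.map_apply]
  have := quotN_le oz W h0
  rwa [oz.N_zero] at this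

lemma quotN_smul_le {n : ℕ} (c : ℂ) (z : Matrix (Fin n) (Fin n) (Z ⧸ W)) :
    quotN oz.N W n (c • z) ≤ ‖c‖ * quotN oz.N W n z := by
  rcases eq_or_ne c 0 with rfl | hc
  · rw [zero_smul, quotN_zero]
    simp
  · refine le_of_forall_pos_le_add fun ε hε => ?_
    have hcpos : 0 < ‖c‖ := norm_pos_iff.mpr hc
    obtain ⟨x, hx, hlt⟩ := exists_lift_lt oz W z (div_pos hε hcpos)
    have hlift : (c • x).map ⇑W.mkQ = c • z := by
      rw [← hx]
      ext i j
      simp [Matrix.map_apply, Matrix.smul_apply]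
    calc quotN oz.N W n (c • z) ≤ oz.N n (c • x) := quotN_le oz W hlift
      _ = ‖c‖ * oz.N n x := oz.smul_eq n c x
      _ ≤ ‖c‖ * (quotN oz.N W n z + ε / ‖c‖) := by
          exact mul_le_mul_of_nonneg_left hlt.le (norm_nonneg _)
      _ = ‖c‖ * quotN oz.N W n z + ε := by
          rw [mul_add, mul_comm (‖c‖) (ε / ‖c‖), div_mul_cancel₀ _ (ne_of_gt hcpos)]

variable [IsClosed (W : Set Z)]

/-- The quotient operator space structure. -/
noncomputable def quotOSS : OSS (Z ⧸ W) where
  N := quotN oz.N W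
  nonneg n z := quotN_nonneg oz W z
  add_le n z₁ z₂ := by
    refine le_of_forall_pos_le_add fun ε hε => ?_
    obtain ⟨x₁, hx₁, hlt₁⟩ := exists_lift_lt oz W z₁ (half_pos hε)
    obtain ⟨x₂, hx₂, hlt₂⟩ := exists_lift_lt oz W z₂ (half_pos hε)
    have hlift : (x₁ + x₂).map ⇑W.mkQ = z₁ + z₂ := by
      rw [← hx₁, ← hx₂]
      ext i j
      simp [Matrix.map_apply, Matrix.add_apply]
    calc quotN oz.N W n (z₁ + z₂) ≤ oz.N n (x₁ + x₂) := quotN_le oz W hlift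
      _ ≤ oz.N n x₁ + oz.N n x₂ := oz.add_le n x₁ x₂
      _ ≤ quotN oz.N W n z₁ + quotN oz.N W n z₂ + ε := by linarith
  smul_eq n c z := by
    rcases eq_or_ne c 0 with rfl | hc
    · rw [zero_smul, quotN_zero]
      simp
    · refine le_antisymm (quotN_smul_le oz W c z) ?_
      have h2 : quotN oz.N W n z ≤ ‖c⁻¹‖ * quotN oz.N W n (c • z) := by
        have := quotN_smul_le oz W c⁻¹ (c • z)
        rwa [smul_smul, inv_mul_cancel₀ hc, one_smul] at this
      have hcpos : 0 < ‖c‖ := norm_pos_iff.mpr hc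
      rw [norm_inv] at h2
      calc ‖c‖ * quotN oz.N W n z ≤ ‖c‖ * (‖c‖⁻¹ * quotN oz.N W n (c • z)) :=
            mul_le_mul_of_nonneg_left h2 (norm_nonneg _)
        _ = quotN oz.N W n (c • z) := by
            rw [← mul_assoc, mul_inv_cancel₀ (ne_of_gt hcpos), one_mul]
  eq_zero n z hz := by
    ext i j
    rw [Matrix.zero_apply, ← norm_eq_zero]
    have hnn : 0 ≤ ‖z i j‖ := norm_nonneg _
    have hle : ∀ ε : ℝ, 0 < ε → ‖z i j‖ ≤ 0 + ε := by
      intro ε hε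
      obtain ⟨x, hx, hlt⟩ := exists_lift_lt oz W z hε
      rw [hz, zero_add] at hlt
      have hmk : W.mkQ (x i j) = z i j := by
        rw [← hx]
        simp [Matrix.map_apply]
      calc ‖z i j‖ = ‖W.mkQ (x i j)‖ := by rw [hmk]
        _ ≤ ‖x i j‖ := by
            rw [Submodule.mkQ_apply]
            exact Submodule.Quotient.norm_mk_le W (x i j)
        _ ≤ oz.N n x := oz.norm_entry_le n x i j
        _ ≤ 0 + ε := by linarith
    have := le_of_forall_pos_le_add hle
    linarith
  level_one a := by
    refine le_antisymm ?_ ?_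
    · refine le_of_forall_pos_le_add fun ε hε => ?_
      obtain ⟨b, hb, hblt⟩ := Submodule.Quotient.norm_mk_lt a hε
      have hlift : (Matrix.of fun _ _ : Fin 1 => b).map ⇑W.mkQ
          = Matrix.of fun _ _ => a := by
        ext i j
        simp [Matrix.map_apply, hb]
      calc quotN oz.N W 1 (Matrix.of fun _ _ => a)
          ≤ oz.N 1 (Matrix.of fun _ _ => b) := quotN_le oz W hlift
        _ = ‖b‖ := oz.level_one b
        _ ≤ ‖a‖ + ε := hblt.le
    · refine le_csInf (quotN_set_nonempty oz W _) ?_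
      rintro r ⟨x, hx, rfl⟩
      have hxx : x = Matrix.of fun _ _ => x 0 0 := by
        ext i j
        rw [Subsingleton.elim i 0, Subsingleton.elim j 0]
        rfl
      have hmk : W.mkQ (x 0 0) = a := by
        have := congrFun (congrFun hx 0) 0
        simpa [Matrix.map_apply] using this
      calc ‖a‖ = ‖W.mkQ (x 0 0)‖ := by rw [hmk]
        _ ≤ ‖x 0 0‖ := by
            rw [Submodule.mkQ_apply]
            exact Submodule.Quotient.norm_mk_le W (x 0 0)
        _ = oz.N 1 x := by rw [← oz.level_one (x 0 0), ← hxx]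
  ruan_mul n a b z := by
    refine le_of_forall_pos_le_add fun ε hε => ?_
    have hd : 0 < scNorm a * scNorm b + 1 := by
      have := mul_nonneg (scNorm_nonneg a) (scNorm_nonneg b)
      linarith
    obtain ⟨x, hx, hlt⟩ := exists_lift_lt oz W z (div_pos hε hd)
    have hlift : (smulMat a x b).map ⇑W.mkQ = smulMat a z b := by
      rw [map_smulMat, hx]
    have hbound : scNorm a * oz.N n x * scNorm b
        ≤ scNorm a * quotN oz.N W n z * scNorm b + ε := by
      have h1 : scNorm a * oz.N n x * scNorm b
          ≤ scNorm a * (quotN oz.N W n z + ε / (scNorm a * scNorm b + 1)) * scNorm b := by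
        have h2 : oz.N n x ≤ quotN oz.N W n z + ε / (scNorm a * scNorm b + 1) := hlt.le
        have := mul_le_mul_of_nonneg_left h2 (scNorm_nonneg a)
        exact mul_le_mul_of_nonneg_right this (scNorm_nonneg b)
      have h3 : scNorm a * (quotN oz.N W n z + ε / (scNorm a * scNorm b + 1)) * scNorm b
          = scNorm a * quotN oz.N W n z * scNorm b
            + scNorm a * scNorm b * (ε / (scNorm a * scNorm b + 1)) := by ring
      have h4 : scNorm a * scNorm b * (ε / (scNorm a * scNorm b + 1)) ≤ ε := by
        rw [mul_div_assoc']
        rw [div_le_iff₀ hd]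
        have := mul_nonneg (scNorm_nonneg a) (scNorm_nonneg b)
        nlinarith
      linarith
    calc quotN oz.N W n (smulMat a z b) ≤ oz.N n (smulMat a x b) := quotN_le oz W hlift
      _ ≤ scNorm a * oz.N n x * scNorm b := oz.ruan_mul n a b x
      _ ≤ scNorm a * quotN oz.N W n z * scNorm b + ε := hbound
  ruan_block n m z w := by
    refine le_antisymm ?_ ?_
    · refine le_of_forall_pos_le_add fun ε hε => ?_
      obtain ⟨x, hx, hltx⟩ := exists_lift_lt oz W z hε
      obtain ⟨y, hy, hlty⟩ := exists_lift_lt oz W w hε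
      have hlift : ((Matrix.fromBlocks x 0 0 y).submatrix
            finSumFinEquiv.symm finSumFinEquiv.symm).map ⇑W.mkQ
          = (Matrix.fromBlocks z 0 0 w).submatrix finSumFinEquiv.symm finSumFinEquiv.symm := by
        ext p q
        simp only [Matrix.map_apply, Matrix.submatrix_apply]
        rcases finSumFinEquiv.symm p with a | a <;> rcases finSumFinEquiv.symm q with b | b
        · simp only [Matrix.fromBlocks_apply₁₁]
          rw [← hx]
          simp [Matrix.map_apply]
        · simp
        · simp
        · simp only [Matrix.fromBlocks_apply₂₂]
          rw [← hy]
          simp [Matrix.map_apply]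
      calc quotN oz.N W (n + m)
            ((Matrix.fromBlocks z 0 0 w).submatrix finSumFinEquiv.symm finSumFinEquiv.symm)
          ≤ oz.N (n + m) ((Matrix.fromBlocks x 0 0 y).submatrix
              finSumFinEquiv.symm finSumFinEquiv.symm) := quotN_le oz W hlift
        _ = max (oz.N n x) (oz.N m y) := oz.ruan_block n m x y
        _ ≤ max (quotN oz.N W n z + ε) (quotN oz.N W m w + ε) :=
            max_le_max hltx.le hlty.le
        _ = max (quotN oz.N W n z) (quotN oz.N W m w) + ε := max_add_add_right _ _ _
    · refine max_le ?_ ?_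
      · refine le_csInf (quotN_set_nonempty oz W _) ?_
        rintro r ⟨M, hM, rfl⟩
        have hA : (Matrix.of fun i j =>
            M (finSumFinEquiv (Sum.inl i)) (finSumFinEquiv (Sum.inl j))).map ⇑W.mkQ = z := by
          ext i j
          have := congrFun (congrFun hM (finSumFinEquiv (Sum.inl i)))
            (finSumFinEquiv (Sum.inl j))
          simp only [Matrix.map_apply, Matrix.submatrix_apply,
            Equiv.symm_apply_apply, Matrix.fromBlocks_apply₁₁] at this
          simpa [Matrix.map_apply] using this
        exact le_trans (quotN_le oz W hA) (oz.N_corner_left n m M)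
      · refine le_csInf (quotN_set_nonempty oz W _) ?_
        rintro r ⟨M, hM, rfl⟩
        have hD : (Matrix.of fun i j =>
            M (finSumFinEquiv (Sum.inr i)) (finSumFinEquiv (Sum.inr j))).map ⇑W.mkQ = w := by
          ext i j
          have := congrFun (congrFun hM (finSumFinEquiv (Sum.inr i)))
            (finSumFinEquiv (Sum.inr j))
          simp only [Matrix.map_apply, Matrix.submatrix_apply,
            Equiv.symm_apply_apply, Matrix.fromBlocks_apply₂₂] at this
          simpa [Matrix.map_apply] using this
        exact le_trans (quotN_le oz W hD) (oz.N_corner_right n m M)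

end QuotOSS

end OSP
namespace OSP

/-- `M_n(Z)` with the level-`n` matrix norm, as a normed space. -/
def MatT (Z : OpSpace) (n : ℕ) : Type := Matrix (Fin n) (Fin n) Z.carrier

instance (Z : OpSpace) (n : ℕ) : AddCommGroup (MatT Z n) :=
  inferInstanceAs (AddCommGroup (Matrix (Fin n) (Fin n) Z.carrier))

instance (Z : OpSpace) (n : ℕ) : Module ℂ (MatT Z n) :=
  inferInstanceAs (Module ℂ (Matrix (Fin n) (Fin n) Z.carrier))

noncomputable instance (Z : OpSpace) (n : ℕ) : NormedAddCommGroup (MatT Z n) :=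
  AddGroupNorm.toNormedAddCommGroup
    { toFun := fun x => Z.str.N n x
      map_zero' := Z.str.N_zero n
      add_le' := Z.str.add_le n
      neg' := fun x => by
        have h := Z.str.smul_eq n (-1) x
        simp only [norm_neg, norm_one, one_mul] at h
        rw [← h]
        exact congrArg (Z.str.N n) (neg_one_smul ℂ (x : Matrix (Fin n) (Fin n) Z.carrier)).symm
      eq_zero_of_map_eq_zero' := fun x hx => Z.str.eq_zero n x hx }

/-- Identity reinterpretation of a matrix over the carrier as an element of `MatT`. -/
def toMatT {Z : OpSpace} {n : ℕ} (x : Matrix (Fin n) (Fin n) Z.carrier) : MatT Z n := x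

lemma MatT.norm_def (Z : OpSpace) (n : ℕ) (x : MatT Z n) : ‖x‖ = Z.str.N n x := rfl

noncomputable instance (Z : OpSpace) (n : ℕ) : NormedSpace ℂ (MatT Z n) :=
  ⟨fun c x => le_of_eq (Z.str.smul_eq n c x)⟩

section MaxN

variable {V : Type} [NormedAddCommGroup V] [NormedSpace ℂ V]

lemma maxN_bddAbove (n : ℕ) (x : Matrix (Fin n) (Fin n) V) :
    BddAbove {r | ∃ (Z : OpSpace) (u : V →L[ℂ] Z.carrier),
      ‖u‖ ≤ 1 ∧ r = Z.str.N n (x.map ⇑u)} := by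
  refine ⟨∑ i, ∑ j, ‖x i j‖, ?_⟩
  rintro r ⟨Z, u, hu, rfl⟩
  calc Z.str.N n (x.map ⇑u) ≤ ∑ i, ∑ j, ‖(x.map ⇑u) i j‖ := Z.str.N_le_sum n _
    _ ≤ ∑ i, ∑ j, ‖x i j‖ := by
        refine Finset.sum_le_sum fun i _ => Finset.sum_le_sum fun j _ => ?_
        rw [Matrix.map_apply]
        calc ‖u (x i j)‖ ≤ ‖u‖ * ‖x i j‖ := u.le_opNorm _
          _ ≤ 1 * ‖x i j‖ := mul_le_mul_of_nonneg_right hu (norm_nonneg _)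
          _ = ‖x i j‖ := one_mul _

end MaxN

end OSP
/-- if `X` is an infinite dimensional operator space such that the quotient
of `X` by every proper closed nontrivial subspace is maximal, then `X` is maximal. -/
theorem stmt18 (X : Type) [NormedAddCommGroup X] [NormedSpace ℂ X] [CompleteSpace X]
    (os : OSP.OSS X) (hinf : ¬ FiniteDimensional ℂ X)
    (h : ∀ (Y : Submodule ℂ X) [IsClosed (Y : Set X)], Y ≠ ⊥ → Y ≠ ⊤ →
      ∀ (n : ℕ) (z : Matrix (Fin n) (Fin n) (X ⧸ Y)),
        OSP.quotN os.N Y n z = OSP.maxN (X ⧸ Y) n z) :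
    ∀ (n : ℕ) (x : Matrix (Fin n) (Fin n) X), os.N n x = OSP.maxN X n x := by
  classical
  intro n x
  refine le_antisymm ?_ ?_
  · -- easy direction: `os.N ≤ maxN`, using the identity map as competitor
    refine le_csSup (OSP.maxN_bddAbove n x) ?_
    refine ⟨⟨X, os⟩, ContinuousLinearMap.id ℂ X, ContinuousLinearMap.norm_id_le, ?_⟩
    show os.N n x = os.N n (x.map ⇑(ContinuousLinearMap.id ℂ X))
    rw [ContinuousLinearMap.coe_id', Matrix.map_id]
  · -- hard direction
    refine Real.sSup_le ?_ (os.nonneg n x)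
    rintro r ⟨Z, u, hu, rfl⟩
    by_cases hA0 : x.map ⇑u = 0
    · rw [hA0, Z.str.N_zero n]
      exact os.nonneg n x
    -- Hahn-Banach: a norming functional for `A := x.map u` at level `n`
    obtain ⟨g, hg1, hgA⟩ := exists_dual_vector (E := OSP.MatT Z n) ℂ (x.map ⇑u) (norm_ne_zero_iff.mpr hA0)
    -- the `n²` functionals obtained from `g` through single entry matrices
    set φ : Fin n × Fin n → X →ₗ[ℂ] ℂ := fun p =>
      { toFun := fun v => g (Matrix.single p.1 p.2 (u v) : OSP.MatT Z n)
        map_add' := fun v₁ v₂ => by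
          rw [map_add, Matrix.single_add]
          exact map_add g _ _
        map_smul' := fun c v => by
          dsimp only [RingHom.id_apply]
          rw [map_smul, ← Matrix.smul_single]; exact map_smul g c _ } with hφ
    -- they have a common nonzero kernel vector `v` since `X` is infinite dimensional
    have hker : ∃ v : X, v ≠ 0 ∧ ∀ p : Fin n × Fin n, φ p v = 0 := by
      by_contra hcon
      push_neg at hcon
      apply hinf
      have hinj : Function.Injective (LinearMap.pi φ : X →ₗ[ℂ] (Fin n × Fin n → ℂ)) := by
        intro a b hab
        by_contra hne
        obtain ⟨p, hp⟩ := hcon (a - b) (sub_ne_zero.mpr hne)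
        apply hp
        have h0 : (LinearMap.pi φ) (a - b) = 0 := by rw [map_sub, hab, sub_self]
        have h1 := congrFun h0 p
        simpa [LinearMap.pi_apply] using h1
      exact FiniteDimensional.of_injective (LinearMap.pi φ) hinj
    obtain ⟨v, hv0, hvker⟩ := hker
    -- quotient `Z` by the span of `u v`
    set W : Submodule ℂ Z.carrier := Submodule.span ℂ {u v} with hW
    haveI hWfd : FiniteDimensional ℂ W :=
      FiniteDimensional.span_of_finite ℂ (Set.finite_singleton (u v))
    haveI hWc : IsClosed (W : Set Z.carrier) := Submodule.closed_of_finiteDimensional W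
    -- `g` kills `M_n(W)`, so the norm of `A` survives in the quotient
    have step1 : Z.str.N n (x.map ⇑u) ≤ OSP.quotN Z.str.N W n ((x.map ⇑u).map ⇑W.mkQ) := by
      refine le_csInf (OSP.quotN_set_nonempty Z.str W _) ?_
      rintro r ⟨x', hx', rfl⟩
      have hDmem : ∀ i j, x' i j - (x.map ⇑u) i j ∈ W := by
        intro i j
        have hentry : W.mkQ (x' i j) = W.mkQ ((x.map ⇑u) i j) := by
          have h1 := congrFun (congrFun hx' i) j
          simpa [Matrix.map_apply] using h1
        rw [Submodule.mkQ_apply, Submodule.mkQ_apply] at hentry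
        exact (Submodule.Quotient.eq W).mp hentry
      have hgD : g (OSP.toMatT x' - OSP.toMatT (x.map ⇑u)) = 0 := by
        have hdec : OSP.toMatT x' - OSP.toMatT (x.map ⇑u)
            = ∑ i, ∑ j, Matrix.single i j (x' i j - (x.map ⇑u) i j) :=
          Matrix.matrix_eq_sum_single (x' - x.map ⇑u)
        rw [hdec]; erw [map_sum]
        refine Finset.sum_eq_zero fun i _ => ?_
        erw [map_sum]
        refine Finset.sum_eq_zero fun j _ => ?_
        obtain ⟨c, hc⟩ := Submodule.mem_span_singleton.mp (hDmem i j)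
        rw [← hc, ← Matrix.smul_single]; erw [map_smul]
        have hzero : g (Matrix.single i j (u v)) = 0 := hvker (i, j)
        rw [hzero, smul_zero]
      have hgA' : g (OSP.toMatT (x.map ⇑u)) = (‖OSP.toMatT (x.map ⇑u)‖ : ℂ) := hgA
      have hx'A : OSP.toMatT x' = OSP.toMatT (x.map ⇑u)
          + (OSP.toMatT x' - OSP.toMatT (x.map ⇑u)) := by abel
      calc Z.str.N n (x.map ⇑u) = ‖OSP.toMatT (x.map ⇑u)‖ := rfl
        _ = ‖g (OSP.toMatT (x.map ⇑u))‖ := by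
            rw [hgA', Complex.norm_real, norm_norm]
        _ = ‖g (OSP.toMatT x')‖ := by rw [hx'A, map_add, hgD, add_zero]
        _ ≤ ‖g‖ * ‖OSP.toMatT x'‖ := g.le_opNorm _
        _ = Z.str.N n x' := by rw [hg1, one_mul]; rfl
    -- the quotient operator space
    let Zq : OSP.OpSpace := ⟨Z.carrier ⧸ W, OSP.quotOSS Z.str W⟩
    -- the nontrivial proper closed subspace `Y = span {v}`
    set Y : Submodule ℂ X := Submodule.span ℂ {v} with hY
    haveI hYfd : FiniteDimensional ℂ Y :=
      FiniteDimensional.span_of_finite ℂ (Set.finite_singleton v)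
    haveI hYc : IsClosed (Y : Set X) := Submodule.closed_of_finiteDimensional Y
    have hYbot : Y ≠ ⊥ := fun hbot => hv0 (Submodule.span_singleton_eq_bot.mp hbot)
    have hYtop : Y ≠ ⊤ := by
      intro htop
      apply hinf
      haveI : FiniteDimensional ℂ (⊤ : Submodule ℂ X) := htop ▸ hYfd
      exact Submodule.topEquiv.finiteDimensional
    -- the map `X → Z/W` kills `Y`, hence factors through `X/Y` contractively
    let ut : X →L[ℂ] Z.carrier ⧸ W := (OSP.mkQCLM W).comp u
    have hut : ∀ a : X, ut a = W.mkQ (u a) := fun a => rfl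
    have hYle : Y ≤ LinearMap.ker (ut.toLinearMap) := by
      rw [hY, Submodule.span_le, Set.singleton_subset_iff]
      have : ut v = 0 := by
        rw [hut, Submodule.mkQ_apply]
        exact (Submodule.Quotient.mk_eq_zero W).mpr (Submodule.mem_span_singleton_self _)
      exact this
    let vb0 : (X ⧸ Y) →ₗ[ℂ] Z.carrier ⧸ W := Y.liftQ ut.toLinearMap hYle
    have hvb0 : ∀ a : X, vb0 (Y.mkQ a) = ut a := fun a => rfl
    have hvb0bound : ∀ z : X ⧸ Y, ‖vb0 z‖ ≤ 1 * ‖z‖ := by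
      intro z
      rw [one_mul]
      refine le_of_forall_pos_le_add fun ε hε => ?_
      obtain ⟨m, hm, hmlt⟩ := Submodule.Quotient.norm_mk_lt z hε
      have h1 : vb0 z = ut m := by rw [← hm, ← Submodule.mkQ_apply, hvb0]
      rw [h1, hut]
      calc ‖W.mkQ (u m)‖ ≤ ‖u m‖ := by
            rw [Submodule.mkQ_apply]
            exact Submodule.Quotient.norm_mk_le W (u m)
        _ ≤ ‖u‖ * ‖m‖ := u.le_opNorm m
        _ ≤ 1 * ‖m‖ := mul_le_mul_of_nonneg_right hu (norm_nonneg _)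
        _ = ‖m‖ := one_mul _
        _ ≤ ‖z‖ + ε := hmlt.le
    let vb : (X ⧸ Y) →L[ℂ] Z.carrier ⧸ W := vb0.mkContinuous 1 hvb0bound
    have hvbnorm : ‖vb‖ ≤ 1 := LinearMap.mkContinuous_norm_le vb0 zero_le_one hvb0bound
    -- assemble the chain of inequalities
    have hcomm : (x.map ⇑u).map ⇑W.mkQ = (x.map ⇑Y.mkQ).map ⇑vb := by
      rw [Matrix.map_map, Matrix.map_map]
      rfl
    calc Z.str.N n (x.map ⇑u)
        ≤ OSP.quotN Z.str.N W n ((x.map ⇑u).map ⇑W.mkQ) := step1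
      _ = Zq.str.N n ((x.map ⇑Y.mkQ).map ⇑vb) := by rw [hcomm]; rfl
      _ ≤ OSP.maxN (X ⧸ Y) n (x.map ⇑Y.mkQ) :=
          le_csSup (OSP.maxN_bddAbove n _) ⟨Zq, vb, hvbnorm, rfl⟩
      _ = OSP.quotN os.N Y n (x.map ⇑Y.mkQ) := (h Y hYbot hYtop n _).symm
      _ ≤ os.N n x := OSP.quotN_le os Y rfl
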